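/- Let A be a countable-dimensional commutative domain over a field K with derivations D_1, D_2, … such that the differential center of Q(A) equals K. Then there exists a sequence a_1, a_2, … of nonzero elements of A such that every nonzero differential ideal of A (ideal I with D_i I ⊆ I for all i) contains a_n for all sufficiently large n. -/

import Mathlib

open Submodule


lemma span_seq {K A : Type*} [Field K] [CommRing A] [IsDomain A] [Algebra K A]
    (hcount : Module.rank K A ≤ Cardinal.aleph0) :
    ∃ e : ℕ → A, Submodule.span K (Set.range e) = ⊤ := by
  let b := Module.Basis.ofVectorSpace K A
  let s : Set A := Module.Basis.ofVectorSpaceIndex K A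
  have hrank : Cardinal.mk s = Module.rank K A := b.mk_eq_rank''
  have hcnt : Countable s := Cardinal.mk_le_aleph0_iff.mp (hrank ▸ hcount)
  have hcnt' : Countable (insert (1:A) s : Set A) := Set.Countable.insert 1
    (Set.countable_coe_iff.mp hcnt) |>.to_subtype
  have hne : Nonempty (insert (1:A) s : Set A) := ⟨⟨1, Set.mem_insert _ _⟩⟩
  obtain ⟨f, hf⟩ := exists_surjective_nat (insert (1:A) s : Set A)
  refine ⟨fun n => (f n : A), ?_⟩
  have hr : Set.range (fun n => (f n : A)) = insert (1:A) s := by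
    ext y
    constructor
    · rintro ⟨n, rfl⟩; exact (f n).2
    · intro hy
      obtain ⟨n, hn⟩ := hf ⟨y, hy⟩
      exact ⟨n, by simp [hn]⟩
  rw [hr]
  refine top_unique ?_
  rw [Submodule.span_insert]
  refine le_trans ?_ le_sup_right
  have : Submodule.span K s = ⊤ := by
    rw [← b.span_eq]
    congr 1
    exact (Module.Basis.range_ofVectorSpace K A).symm
  rw [this]


lemma frac_aux {K A ι : Type*} [Field K] [CommRing A] [IsDomain A] [Algebra K A]
    (D : ι → Derivation K A A)
    (DQ : ι → Derivation K (FractionRing A) (FractionRing A))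
    (hDQ : ∀ i a, DQ i (algebraMap A (FractionRing A) a) = algebraMap A (FractionRing A) (D i a))
    (hcenter : ∀ f : FractionRing A, (∀ i, DQ i f = 0) → ∃ c : K, f = algebraMap K (FractionRing A) c)
    (x v : A) (hx : x ≠ 0) (h : ∀ i, x * D i v - D i x * v = 0) :
    ∃ c : K, v = algebraMap K A c * x := by
  set φ := algebraMap A (FractionRing A) with hφ
  have hφx : φ x ≠ 0 := by simpa [hφ] using hx
  set f : FractionRing A := φ v / φ x with hf
  have hfx : f * φ x = φ v := div_mul_cancel₀ _ hφx
  have hdf : ∀ i, DQ i f = 0 := by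
    intro i
    have h1 : DQ i (f * φ x) = DQ i (φ v) := by rw [hfx]
    rw [Derivation.leibniz, hDQ, hDQ] at h1
    rw [smul_eq_mul, smul_eq_mul] at h1
    -- h1 : f * φ (D i x) + φ x * DQ i f = φ (D i v)
    have h5 : φ x * φ x * DQ i f = φ (x * D i v - D i x * v) := by
      rw [map_sub, map_mul, map_mul]
      have h3 : φ x * f = φ v := by rw [mul_comm]; exact hfx
      linear_combination φ x * h1 - φ (D i x) * h3
    rw [h i, map_zero] at h5
    rcases mul_eq_zero.mp h5 with h6 | h6
    · exact absurd h6 (mul_ne_zero hφx hφx)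
    · exact h6
  obtain ⟨c, hc⟩ := hcenter f hdf
  refine ⟨c, IsFractionRing.injective A (FractionRing A) ?_⟩
  rw [← hfx, hc, map_mul, ← IsScalarTower.algebraMap_apply]

lemma key_aux {K A ι : Type*} [Field K] [CommRing A] [IsDomain A] [Algebra K A]
    (D : ι → Derivation K A A)
    (DQ : ι → Derivation K (FractionRing A) (FractionRing A))
    (hDQ : ∀ i a, DQ i (algebraMap A (FractionRing A) a) = algebraMap A (FractionRing A) (D i a))
    (hcenter : ∀ f : FractionRing A, (∀ i, DQ i f = 0) → ∃ c : K, f = algebraMap K (FractionRing A) c)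
    (n : ℕ) :
    ∀ s : Finset A, s.card ≤ n →
      ∃ b : A, b ≠ 0 ∧ ∀ v ∈ Submodule.span K (s : Set A), v ≠ 0 →
        ∀ I : Ideal A, (∀ i, ∀ y ∈ I, D i y ∈ I) → v ∈ I → b ∈ I := by
  classical
  induction n with
  | zero =>
    intro s hs
    have hse : s = ∅ := Finset.card_eq_zero.mp (Nat.le_zero.mp hs)
    refine ⟨1, one_ne_zero, ?_⟩
    intro v hv hv0 I _ _
    subst hse
    simp only [Finset.coe_empty, Submodule.span_empty, Submodule.mem_bot] at hv
    exact absurd hv hv0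
  | succ n ih =>
    intro s hs
    by_cases h0 : (0:A) ∈ s
    · obtain ⟨b, hb, hbp⟩ := ih (s.erase 0) (by
        have := Finset.card_erase_of_mem h0
        omega)
      refine ⟨b, hb, ?_⟩
      intro v hv hv0 I hI hvI
      refine hbp v ?_ hv0 I hI hvI
      have : Submodule.span K (s : Set A) = Submodule.span K ((s.erase 0 : Finset A) : Set A) := by
        conv_lhs => rw [← Finset.insert_erase h0]
        rw [Finset.coe_insert, Submodule.span_insert_zero]
      rwa [this] at hv
    rcases Finset.eq_empty_or_nonempty s with hse | ⟨x, hxs⟩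
    · refine ⟨1, one_ne_zero, ?_⟩
      intro v hv hv0 I _ _
      subst hse
      simp only [Finset.coe_empty, Submodule.span_empty, Submodule.mem_bot] at hv
      exact absurd hv hv0
    have hx : x ≠ 0 := fun h => h0 (h ▸ hxs)
    set V : Submodule K A := Submodule.span K (s : Set A) with hV
    haveI : FiniteDimensional K V := FiniteDimensional.span_of_finite K s.finite_toSet
    set L : ι → A →ₗ[K] A := fun i =>
      (LinearMap.mulLeft K x) ∘ₗ (D i : A →ₗ[K] A) - LinearMap.mulLeft K (D i x) with hL
    have hLapp : ∀ i v, L i v = x * D i v - D i x * v := by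
      intro i v; simp [hL]
    have hLx : ∀ i, L i x = 0 := by
      intro i; rw [hLapp]; ring
    -- choose finite S₀ minimizing finrank
    set g : Finset ι → Submodule K A := fun S => V ⊓ S.inf fun i => LinearMap.ker (L i) with hg
    have hgle : ∀ S, g S ≤ V := fun S => inf_le_left
    haveI hfd : ∀ S, FiniteDimensional K (g S) := fun S =>
      Submodule.finiteDimensional_of_le (hgle S)
    have hne : (Set.range fun S => Module.finrank K (g S)).Nonempty := ⟨_, ⟨∅, rfl⟩⟩
    obtain ⟨S₀, hS₀⟩ := Nat.sInf_mem hne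
    change Module.finrank K (g S₀) = _ at hS₀
    have hMker : ∀ i, g S₀ ≤ LinearMap.ker (L i) := by
      intro i
      have h1 : g (insert i S₀) = g S₀ ⊓ LinearMap.ker (L i) := by
        simp [hg, Finset.inf_insert, inf_left_comm, inf_assoc, inf_comm]
      have h2 : g (insert i S₀) ≤ g S₀ := by rw [h1]; exact inf_le_left
      have h3 : Module.finrank K (g S₀) ≤ Module.finrank K (g (insert i S₀)) := by
        rw [hS₀]; exact Nat.sInf_le ⟨insert i S₀, rfl⟩
      have h4 : g (insert i S₀) = g S₀ := Submodule.eq_of_le_of_finrank_le h2 h3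
      rw [h1] at h4
      rw [← h4]
      exact inf_le_right
    -- if all L i v = 0 for i in S₀, then v ∈ K x
    have hscalar : ∀ v ∈ V, v ≠ 0 → (∀ i ∈ S₀, L i v = 0) →
        ∃ c : K, c ≠ 0 ∧ v = algebraMap K A c * x := by
      intro v hv hv0 hall
      have hvM : v ∈ g S₀ := by
        rw [hg]
        refine Submodule.mem_inf.mpr ⟨hv, ?_⟩
        rw [Submodule.mem_finsetInf]
        intro i hi
        exact LinearMap.mem_ker.mpr (hall i hi)
      have hallL : ∀ i, x * D i v - D i x * v = 0 := by
        intro i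
        have := hMker i hvM
        rw [LinearMap.mem_ker, hLapp] at this
        exact this
      obtain ⟨c, hc⟩ := frac_aux D DQ hDQ hcenter x v hx hallL
      refine ⟨c, ?_, hc⟩
      rintro rfl
      simp at hc
      exact hv0 hc
    -- inductive elements
    have hIH : ∀ i : ι, ∃ b : A, b ≠ 0 ∧ ∀ w ∈ Submodule.span K (((s.erase x).image (L i) : Finset A) : Set A),
        w ≠ 0 → ∀ I : Ideal A, (∀ j, ∀ y ∈ I, D j y ∈ I) → w ∈ I → b ∈ I := by
      intro i
      refine ih _ ?_
      calc ((s.erase x).image (L i)).card ≤ (s.erase x).card := Finset.card_image_le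
        _ ≤ n := by have := Finset.card_erase_of_mem hxs; omega
    choose B hB1 hB2 using hIH
    -- L i v lies in the span of the image finset
    have hmap : ∀ i, ∀ v ∈ V, L i v ∈
        Submodule.span K (((s.erase x).image (L i) : Finset A) : Set A) := by
      intro i v hv
      have h1 : L i v ∈ Submodule.map (L i) V := Submodule.mem_map_of_mem hv
      rw [hV, Submodule.map_span] at h1
      refine Submodule.span_le.mpr ?_ h1
      intro w hw
      obtain ⟨a, ha, rfl⟩ := hw
      rcases eq_or_ne a x with rfl | hax
      · rw [hLx]; exact Submodule.zero_mem _
      · exact Submodule.subset_span (by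
          simp only [Finset.coe_image, Set.mem_image]
          exact ⟨a, by simp [Finset.mem_erase, hax, ha], rfl⟩)
    refine ⟨x * ∏ i ∈ S₀, B i, mul_ne_zero hx (Finset.prod_ne_zero_iff.mpr fun i _ => hB1 i), ?_⟩
    intro v hv hv0 I hI hvI
    by_cases hall : ∀ i ∈ S₀, L i v = 0
    · obtain ⟨c, hc0, hc⟩ := hscalar v hv hv0 hall
      have hxI : x ∈ I := by
        have : algebraMap K A c⁻¹ * v = x := by
          rw [hc, ← mul_assoc, ← map_mul, inv_mul_cancel₀ hc0, map_one, one_mul]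
        rw [← this]
        exact I.mul_mem_left _ hvI
      exact I.mul_mem_right _ hxI
    · push_neg at hall
      obtain ⟨i, hiS, hLiv⟩ := hall
      have hLivI : L i v ∈ I := by
        rw [hLapp]
        exact I.sub_mem (I.mul_mem_left _ (hI i v hvI)) (I.mul_mem_left _ hvI)
      have hBiI : B i ∈ I := hB2 i (L i v) (hmap i v hv) hLiv I hI hLivI
      obtain ⟨m, hm⟩ := Finset.dvd_prod_of_mem B hiS
      rw [hm]
      exact I.mul_mem_left x (I.mul_mem_right m hBiI)

theorem stmt_9 {K A ι : Type*} [Field K] [CommRing A] [IsDomain A] [Algebra K A]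
    (hcount : Module.rank K A ≤ Cardinal.aleph0)
    (D : ι → Derivation K A A)
    (DQ : ι → Derivation K (FractionRing A) (FractionRing A))
    (hDQ : ∀ i a, DQ i (algebraMap A (FractionRing A) a) =
      algebraMap A (FractionRing A) (D i a))
    (hcenter : ∀ f : FractionRing A, (∀ i, DQ i f = 0) →
      ∃ c : K, f = algebraMap K (FractionRing A) c) :
    ∃ a : ℕ → A, (∀ n, a n ≠ 0) ∧
      ∀ I : Ideal A, I ≠ ⊥ → (∀ i, ∀ x ∈ I, D i x ∈ I) →
        ∃ N, ∀ n ≥ N, a n ∈ I := by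
  classical
  obtain ⟨e, he⟩ := span_seq hcount
  have hIH : ∀ n : ℕ, ∃ b : A, b ≠ 0 ∧
      ∀ v ∈ Submodule.span K (((Finset.range n).image e : Finset A) : Set A), v ≠ 0 →
        ∀ I : Ideal A, (∀ i, ∀ y ∈ I, D i y ∈ I) → v ∈ I → b ∈ I := by
    intro n
    exact key_aux D DQ hDQ hcenter n _ (le_trans Finset.card_image_le (by simp))
  choose c hc1 hc2 using hIH
  refine ⟨fun n => ∏ k ∈ Finset.range (n+1), c k, ?_, ?_⟩
  · intro n
    exact Finset.prod_ne_zero_iff.mpr fun k _ => hc1 k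
  · intro I hI hdiff
    obtain ⟨x, hxI, hx0⟩ := Submodule.exists_mem_ne_zero_of_ne_bot hI
    have hxspan : x ∈ Submodule.span K (Set.range e) := he ▸ Submodule.mem_top
    obtain ⟨t, hts, hxt⟩ := Submodule.mem_span_finite_of_mem_span hxspan
    let kk : A → ℕ := fun y => if h : ∃ k, e k = y then h.choose else 0
    have hkk : ∀ y ∈ t, e (kk y) = y := by
      intro y hy
      have h : ∃ k, e k = y := hts hy
      simp only [kk, dif_pos h]
      exact h.choose_spec
    set N := t.sup kk + 1 with hN
    have htF : (t : Set A) ⊆ (((Finset.range N).image e : Finset A) : Set A) := by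
      intro y hy
      have hy' : y ∈ t := hy
      simp only [Finset.coe_image, Finset.coe_range, Set.mem_image, Set.mem_Iio]
      exact ⟨kk y, Nat.lt_succ_of_le (Finset.le_sup hy'), hkk y hy'⟩
    have hxF : x ∈ Submodule.span K (((Finset.range N).image e : Finset A) : Set A) :=
      Submodule.span_mono htF hxt
    have hcN : c N ∈ I := hc2 N x hxF hx0 I hdiff hxI
    refine ⟨N, fun n hn => ?_⟩
    have hNmem : N ∈ Finset.range (n+1) := Finset.mem_range.mpr (by omega)
    obtain ⟨m, hm⟩ := Finset.dvd_prod_of_mem c hNmem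
    show ∏ k ∈ Finset.range (n+1), c k ∈ I
    rw [hm]
    exact I.mul_mem_right m hcN
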